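/- Let n ≥ 2, let h_1,…,h_{n−1} be integrable complex-valued functions on [0,∞), and let t > 0. Then lim_{ξ→0⁺} ξ^{−(n−1)} ∫_0^t dt_1 ∫_0^{t_1} dt_2 … ∫_0^{t_{n−1}} dt_n Π_{j=1}^{n−1} h_j((t_j − t_{j+1})/ξ) = t · Π_{j=1}^{n−1} ∫_0^∞ h_j(s) ds. -/

import Mathlib

open MeasureTheory Filter intervalIntegral
open scoped Topology

/-- The iterated simplex integral with a chain of rescaled two-point kernels:
`chainKernelIntegral h ξ m s = ∫_0^s du h_{m-1}((s−u)/ξ) ⋅ chainKernelIntegral h ξ (m-1) u`,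
so that `∫_0^t chainKernelIntegral h ξ (n-1) t₁ dt₁` is the `n`-fold simplex integral
`∫_0^t dt₁ ∫_0^{t₁} dt₂ ⋯ ∫_0^{t_{n-1}} dt_n Π_{j=1}^{n-1} h_j((t_j − t_{j+1})/ξ)`
(with the kernels relabelled by `j ↦ n−1−j`). -/
noncomputable def chainKernelIntegral (h : ℕ → ℝ → ℂ) (ξ : ℝ) : ℕ → ℝ → ℂ
  | 0, _ => 1
  | (m + 1), s => ∫ u in (0 : ℝ)..s, h m ((s - u) / ξ) * chainKernelIntegral h ξ m u

open Set in
section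
set_option linter.unusedSectionVars false
open Set

namespace LowDensityAux

variable {E : Type*} [NormedAddCommGroup E] [NormedSpace ℝ E]

lemma integral_comp_kernel (f : ℝ → E) {ξ : ℝ} (hξ : ξ ≠ 0) (s : ℝ) :
    (∫ u in (0:ℝ)..s, f ((s - u) / ξ)) = ξ • ∫ v in (0:ℝ)..s / ξ, f v := by
  have h0 : ∀ u : ℝ, (s - u) / ξ = s / ξ - u / ξ := fun u => sub_div s u ξ
  simp_rw [h0]
  rw [integral_comp_sub_div f hξ (s / ξ)]
  norm_num

lemma intervalIntegrable_comp_kernel {f : ℝ → E} {ξ : ℝ} (hξ : ξ ≠ 0) {s : ℝ}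
    (hf : IntervalIntegrable f volume 0 (s / ξ)) :
    IntervalIntegrable (fun u => f ((s - u) / ξ)) volume 0 s := by
  have h1 := hf.comp_mul_left (c := ξ⁻¹)
  have he : s / ξ / ξ⁻¹ = s := by field_simp
  rw [zero_div, he] at h1
  have h2 := h1.comp_sub_left s
  simp only [sub_zero, sub_self] at h2
  have h3 : (fun u => f ((s - u) / ξ)) = fun u => f (ξ⁻¹ * (s - u)) := by
    funext u; rw [div_eq_inv_mul]
  rw [h3]
  exact h2.symm


variable {h : ℕ → ℝ → ℂ}

lemma chain_sm (hm : ∀ j, StronglyMeasurable (h j)) (ξ : ℝ) (m : ℕ) :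
    StronglyMeasurable (chainKernelIntegral h ξ m) := by
  induction m with
  | zero => exact stronglyMeasurable_const
  | succ m ih =>
    set K : ℝ × ℝ → ℂ := fun p => h m ((p.1 - p.2) / ξ) * chainKernelIntegral h ξ m p.2 with hKdef
    have hK : StronglyMeasurable K :=
      ((hm m).comp_measurable ((measurable_fst.sub measurable_snd).div_const ξ)).mul
        (ih.comp_measurable measurable_snd)
    have hs1 : MeasurableSet {p : ℝ × ℝ | p.2 ∈ Ioc 0 p.1} := by
      apply MeasurableSet.inter
      · exact measurableSet_lt measurable_const measurable_snd
      · exact measurableSet_le measurable_snd measurable_fst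
    have hs2 : MeasurableSet {p : ℝ × ℝ | p.2 ∈ Ioc p.1 0} := by
      apply MeasurableSet.inter
      · exact measurableSet_lt measurable_fst measurable_snd
      · exact measurableSet_le measurable_snd measurable_const
    have h1 : StronglyMeasurable fun s : ℝ =>
        ∫ u, ({p : ℝ × ℝ | p.2 ∈ Ioc 0 p.1}).indicator K (s, u) :=
      (hK.indicator hs1).integral_prod_right'
    have h2 : StronglyMeasurable fun s : ℝ =>
        ∫ u, ({p : ℝ × ℝ | p.2 ∈ Ioc p.1 0}).indicator K (s, u) :=
      (hK.indicator hs2).integral_prod_right'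
    have heq : chainKernelIntegral h ξ (m + 1) = fun s =>
        (∫ u, ({p : ℝ × ℝ | p.2 ∈ Ioc 0 p.1}).indicator K (s, u)) -
        (∫ u, ({p : ℝ × ℝ | p.2 ∈ Ioc p.1 0}).indicator K (s, u)) := by
      funext s
      show (∫ u in Ioc (0:ℝ) s, K (s, u)) - (∫ u in Ioc s (0:ℝ), K (s, u)) = _
      rw [← MeasureTheory.integral_indicator measurableSet_Ioc,
        ← MeasureTheory.integral_indicator measurableSet_Ioc]
      congr 1
    rw [heq]
    exact h1.sub h2


lemma chain_norm_le (hm : ∀ j, StronglyMeasurable (h j))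
    (hint : ∀ j, IntegrableOn (h j) (Ici (0:ℝ))) {ξ : ℝ} (hξ : 0 < ξ) :
    ∀ m, ∀ s : ℝ, 0 ≤ s → ‖chainKernelIntegral h ξ m s‖ ≤
      ξ ^ m * ∏ j ∈ Finset.range m, ∫ v in Ioi (0:ℝ), ‖h j v‖ := by
  intro m
  induction m with
  | zero => intro s _; simp [chainKernelIntegral]
  | succ m ih =>
    intro s hs
    set C : ℝ := ξ ^ m * ∏ j ∈ Finset.range m, ∫ v in Ioi (0:ℝ), ‖h j v‖ with hC
    have hA : ∀ j, 0 ≤ ∫ v in Ioi (0:ℝ), ‖h j v‖ := fun j =>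
      integral_nonneg fun v => norm_nonneg _
    have hCpos : 0 ≤ C := mul_nonneg (pow_nonneg hξ.le m)
      (Finset.prod_nonneg fun j _ => hA j)
    -- interval integrability of the composed kernel
    have hcomp : IntervalIntegrable (fun u => h m ((s - u) / ξ)) volume 0 s := by
      apply intervalIntegrable_comp_kernel hξ.ne'
      rw [intervalIntegrable_iff, uIoc_of_le (by positivity)]
      exact (hint m).mono_set (Ioc_subset_Ioi_self.trans Ioi_subset_Ici_self)
    have hg : IntervalIntegrable (fun u => ‖h m ((s - u) / ξ)‖ * C) volume 0 s :=
      hcomp.norm.mul_const C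
    have hptwise : ∀ᵐ u ∂(volume.restrict (Set.uIoc (0:ℝ) s)),
        ‖h m ((s - u) / ξ) * chainKernelIntegral h ξ m u‖ ≤ ‖h m ((s - u) / ξ)‖ * C := by
      rw [uIoc_of_le hs]
      refine (ae_restrict_iff' measurableSet_Ioc).2 (Eventually.of_forall fun u hu => ?_)
      rw [norm_mul]
      exact mul_le_mul_of_nonneg_left (ih u hu.1.le) (norm_nonneg _)
    have hF : ‖chainKernelIntegral h ξ (m+1) s‖ ≤ |∫ u in (0:ℝ)..s, ‖h m ((s - u) / ξ)‖ * C| := by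
      show ‖∫ u in (0:ℝ)..s, h m ((s - u) / ξ) * chainKernelIntegral h ξ m u‖ ≤ _
      exact intervalIntegral.norm_integral_le_abs_of_norm_le hptwise hg
    have habs : |∫ u in (0:ℝ)..s, ‖h m ((s - u) / ξ)‖ * C|
        = (∫ u in (0:ℝ)..s, ‖h m ((s - u) / ξ)‖) * C := by
      rw [intervalIntegral.integral_mul_const, abs_eq_self.2]
      apply mul_nonneg _ hCpos
      apply intervalIntegral.integral_nonneg hs
      intro u _; exact norm_nonneg _
    have hsub : (∫ u in (0:ℝ)..s, ‖h m ((s - u) / ξ)‖)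
        = ξ * ∫ v in (0:ℝ)..s / ξ, ‖h m v‖ := by
      rw [integral_comp_kernel (fun v => ‖h m v‖) hξ.ne' s, smul_eq_mul]
    have htail : (∫ v in (0:ℝ)..s / ξ, ‖h m v‖) ≤ ∫ v in Ioi (0:ℝ), ‖h m v‖ := by
      rw [intervalIntegral.integral_of_le (by positivity)]
      apply setIntegral_mono_set (IntegrableOn.mono_set (hint m).norm Ioi_subset_Ici_self)
      · exact Eventually.of_forall fun v => norm_nonneg _
      · exact HasSubset.Subset.eventuallyLE Ioc_subset_Ioi_self
    calc ‖chainKernelIntegral h ξ (m+1) s‖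
        ≤ (∫ u in (0:ℝ)..s, ‖h m ((s - u) / ξ)‖) * C := by rw [← habs]; exact hF
      _ = (ξ * ∫ v in (0:ℝ)..s / ξ, ‖h m v‖) * C := by rw [hsub]
      _ ≤ (ξ * ∫ v in Ioi (0:ℝ), ‖h m v‖) * C := by
          apply mul_le_mul_of_nonneg_right _ hCpos
          exact mul_le_mul_of_nonneg_left htail hξ.le
      _ = ξ ^ (m+1) * ∏ j ∈ Finset.range (m+1), ∫ v in Ioi (0:ℝ), ‖h j v‖ := by
          rw [hC, Finset.prod_range_succ, pow_succ]; ring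


/-- Truncated chain kernel: `chainKernelIntegral` extended by `0` to negative arguments. -/
noncomputable def Psi (h : ℕ → ℝ → ℂ) (ξ : ℝ) (m : ℕ) (x : ℝ) : ℂ :=
  if 0 ≤ x then chainKernelIntegral h ξ m x else 0

/-- Truncated primitive of the chain kernel. -/
noncomputable def Phi (h : ℕ → ℝ → ℂ) (ξ : ℝ) (m : ℕ) (x : ℝ) : ℂ :=
  if 0 ≤ x then ∫ u in (0:ℝ)..x, chainKernelIntegral h ξ m u else 0

lemma Psi_sm (hm : ∀ j, StronglyMeasurable (h j)) (ξ : ℝ) (m : ℕ) :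
    StronglyMeasurable (Psi h ξ m) := by
  have : Psi h ξ m = (Ici (0:ℝ)).indicator (chainKernelIntegral h ξ m) := by
    funext x; simp [Psi, Set.indicator_apply]
  rw [this]
  exact (chain_sm hm ξ m).indicator measurableSet_Ici

lemma Psi_norm_le (hm : ∀ j, StronglyMeasurable (h j))
    (hint : ∀ j, IntegrableOn (h j) (Ici (0:ℝ))) {ξ : ℝ} (hξ : 0 < ξ) (m : ℕ) (x : ℝ) :
    ‖Psi h ξ m x‖ ≤ ξ ^ m * ∏ j ∈ Finset.range m, ∫ v in Ioi (0:ℝ), ‖h j v‖ := by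
  unfold Psi
  split_ifs with hx
  · exact chain_norm_le hm hint hξ m x hx
  · rw [norm_zero]
    exact mul_nonneg (pow_nonneg hξ.le m)
      (Finset.prod_nonneg fun j _ => integral_nonneg fun v => norm_nonneg _)

lemma Phi_sm (hm : ∀ j, StronglyMeasurable (h j)) (ξ : ℝ) (m : ℕ) :
    StronglyMeasurable (Phi h ξ m) := by
  have hF := chain_sm hm ξ m
  have hs1 : MeasurableSet {p : ℝ × ℝ | p.2 ∈ Ioc 0 p.1} := by
    apply MeasurableSet.inter
    · exact measurableSet_lt measurable_const measurable_snd
    · exact measurableSet_le measurable_snd measurable_fst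
  have heq : Phi h ξ m = (Ici (0:ℝ)).indicator (fun x =>
      ∫ u, ({p : ℝ × ℝ | p.2 ∈ Ioc 0 p.1}).indicator
        (fun p => chainKernelIntegral h ξ m p.2) (x, u)) := by
    funext x
    simp only [Phi, Set.indicator_apply, mem_Ici]
    split_ifs with hx
    · rw [intervalIntegral.integral_of_le hx,
        ← MeasureTheory.integral_indicator measurableSet_Ioc]
      congr 1
      funext u
      simp [Set.indicator_apply]
    · rfl
  rw [heq]
  exact (((hF.comp_measurable measurable_snd).indicator hs1).integral_prod_right').indicator
    measurableSet_Ici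

lemma Phi_norm_le (hm : ∀ j, StronglyMeasurable (h j))
    (hint : ∀ j, IntegrableOn (h j) (Ici (0:ℝ))) {ξ : ℝ} (hξ : 0 < ξ) (m : ℕ) (x : ℝ) :
    ‖Phi h ξ m x‖ ≤ max x 0 * (ξ ^ m * ∏ j ∈ Finset.range m, ∫ v in Ioi (0:ℝ), ‖h j v‖) := by
  have hCpos : 0 ≤ ξ ^ m * ∏ j ∈ Finset.range m, ∫ v in Ioi (0:ℝ), ‖h j v‖ :=
    mul_nonneg (pow_nonneg hξ.le m)
      (Finset.prod_nonneg fun j _ => integral_nonneg fun v => norm_nonneg _)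
  unfold Phi
  split_ifs with hx
  · have := intervalIntegral.norm_integral_le_of_norm_le_const (a := 0) (b := x)
      (f := chainKernelIntegral h ξ m)
      (C := ξ ^ m * ∏ j ∈ Finset.range m, ∫ v in Ioi (0:ℝ), ‖h j v‖) ?_
    · calc ‖∫ u in (0:ℝ)..x, chainKernelIntegral h ξ m u‖
          ≤ (ξ ^ m * ∏ j ∈ Finset.range m, ∫ v in Ioi (0:ℝ), ‖h j v‖) * |x - 0| := this
        _ = max x 0 * (ξ ^ m * ∏ j ∈ Finset.range m, ∫ v in Ioi (0:ℝ), ‖h j v‖) := by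
            rw [sub_zero, abs_of_nonneg hx, max_eq_left hx, mul_comm]
    · intro u hu
      rw [uIoc_of_le hx] at hu
      exact chain_norm_le hm hint hξ m u hu.1.le
  · simp only [norm_zero]
    exact mul_nonneg (le_max_right _ _) hCpos


lemma chain_succ_eq (hm : ∀ j, StronglyMeasurable (h j)) {ξ : ℝ} (hξ : 0 < ξ)
    (m : ℕ) {t₁ : ℝ} (ht₁ : 0 ≤ t₁) :
    chainKernelIntegral h ξ (m+1) t₁
      = (ξ:ℂ) * ∫ s in Ioi (0:ℝ), h m s * Psi h ξ m (t₁ - ξ * s) := by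
  have hGcongr : EqOn (fun u => h m ((t₁ - u)/ξ) * chainKernelIntegral h ξ m u)
      (fun u => (fun v => h m v * chainKernelIntegral h ξ m (t₁ - ξ * v)) ((t₁ - u)/ξ))
      (uIcc (0:ℝ) t₁) := by
    intro u _
    simp only
    congr 2
    field_simp
    ring
  have hset : EqOn ((Ioc (0:ℝ) (t₁/ξ)).indicator
        (fun v => h m v * chainKernelIntegral h ξ m (t₁ - ξ * v)))
      (fun s => h m s * Psi h ξ m (t₁ - ξ * s)) (Ioi (0:ℝ)) := by
    intro s hs
    rcases le_or_gt s (t₁/ξ) with hsc | hsc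
    · rw [Set.indicator_of_mem (Set.mem_Ioc.2 ⟨hs, hsc⟩)]
      have : 0 ≤ t₁ - ξ * s := by
        rw [sub_nonneg]
        calc ξ * s ≤ ξ * (t₁/ξ) := by
              exact mul_le_mul_of_nonneg_left hsc hξ.le
          _ = t₁ := by field_simp
      simp only [Psi, if_pos this]
    · rw [Set.indicator_of_notMem (fun hmem => absurd hmem.2 (not_le.2 hsc))]
      have : ¬ (0 ≤ t₁ - ξ * s) := by
        rw [not_le, sub_neg]
        calc t₁ = ξ * (t₁/ξ) := by field_simp
          _ < ξ * s := by exact mul_lt_mul_of_pos_left hsc hξ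
      simp only [Psi, if_neg this, mul_zero]
  calc chainKernelIntegral h ξ (m+1) t₁
      = ∫ u in (0:ℝ)..t₁,
          (fun v => h m v * chainKernelIntegral h ξ m (t₁ - ξ * v)) ((t₁ - u)/ξ) :=
        intervalIntegral.integral_congr hGcongr
    _ = ξ • ∫ v in (0:ℝ)..t₁/ξ, h m v * chainKernelIntegral h ξ m (t₁ - ξ * v) :=
        integral_comp_kernel (fun v => h m v * chainKernelIntegral h ξ m (t₁ - ξ * v)) hξ.ne' t₁
    _ = (ξ:ℂ) * ∫ v in Ioc (0:ℝ) (t₁/ξ), h m v * chainKernelIntegral h ξ m (t₁ - ξ * v) := by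
        rw [intervalIntegral.integral_of_le (by positivity), Complex.real_smul]
    _ = (ξ:ℂ) * ∫ s in Ioi (0:ℝ), h m s * Psi h ξ m (t₁ - ξ * s) := by
        congr 1
        rw [← setIntegral_congr_fun measurableSet_Ioi hset,
          setIntegral_indicator measurableSet_Ioc,
          Set.inter_eq_self_of_subset_right Ioc_subset_Ioi_self]

lemma Psi_intervalIntegrable (hm : ∀ j, StronglyMeasurable (h j))
    (hint : ∀ j, IntegrableOn (h j) (Ici (0:ℝ))) {ξ : ℝ} (hξ : 0 < ξ) (m : ℕ) (d a b : ℝ) :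
    IntervalIntegrable (fun x => Psi h ξ m (x - d)) volume a b := by
  rw [intervalIntegrable_iff]
  apply Integrable.mono' (g := fun _ => ξ ^ m * ∏ j ∈ Finset.range m, ∫ v in Ioi (0:ℝ), ‖h j v‖)
  · refine integrableOn_const ?_
    rw [Set.uIoc]
    exact measure_Ioc_lt_top.ne
  · exact (((Psi_sm hm ξ m).comp_measurable
      (measurable_id.sub measurable_const)).aestronglyMeasurable)
  · exact Eventually.of_forall fun x => Psi_norm_le hm hint hξ m (x - d)

lemma Psi_primitive (hm : ∀ j, StronglyMeasurable (h j))
    (hint : ∀ j, IntegrableOn (h j) (Ici (0:ℝ))) {ξ : ℝ} (hξ : 0 < ξ) (m : ℕ)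
    {r d : ℝ} (hr : 0 ≤ r) (hd : 0 ≤ d) :
    (∫ t₁ in Ioc (0:ℝ) r, Psi h ξ m (t₁ - d)) = Phi h ξ m (r - d) := by
  rw [← intervalIntegral.integral_of_le hr,
    intervalIntegral.integral_comp_sub_right (fun x => Psi h ξ m x) d]
  rcases le_or_gt 0 (r - d) with hrd | hrd
  · have hii1 : IntervalIntegrable (Psi h ξ m) volume (0 - d) 0 := by
      simpa using Psi_intervalIntegrable hm hint hξ m 0 (0 - d) 0
    have hii2 : IntervalIntegrable (Psi h ξ m) volume 0 (r - d) := by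
      simpa using Psi_intervalIntegrable hm hint hξ m 0 0 (r - d)
    rw [← intervalIntegral.integral_add_adjacent_intervals hii1 hii2]
    have h1 : (∫ x in (0 - d)..(0:ℝ), Psi h ξ m x) = 0 := by
      rw [intervalIntegral.integral_congr_ae (g := fun _ => (0:ℂ)),
        intervalIntegral.integral_zero]
      filter_upwards [compl_mem_ae_iff.2 (measure_singleton (0:ℝ))] with x hx hmem
      rcases Set.mem_uIoc.1 hmem with h' | h'
      · have hx0 : x < 0 := lt_of_le_of_ne h'.2 hx
        simp only [Psi, if_neg (not_le.2 hx0)]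
      · exfalso
        have := h'.1
        have := h'.2
        linarith [hd]
    have h2 : (∫ x in (0:ℝ)..(r - d), Psi h ξ m x) = Phi h ξ m (r - d) := by
      rw [Phi, if_pos hrd]
      apply intervalIntegral.integral_congr
      intro x hx
      rw [uIcc_of_le hrd] at hx
      simp only [Psi, if_pos hx.1]
    rw [h1, h2, zero_add]
  · have h0 : (∫ x in (0 - d)..(r - d), Psi h ξ m x) = 0 := by
      rw [intervalIntegral.integral_congr (g := fun _ => (0:ℂ)),
        intervalIntegral.integral_zero]
      intro x hx
      rw [uIcc_of_le (by linarith : (0:ℝ) - d ≤ r - d)] at hx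
      have hx0 : x < 0 := lt_of_le_of_lt hx.2 hrd
      simp only [Psi, if_neg (not_le.2 hx0)]
    rw [h0, Phi, if_neg (not_le.2 hrd)]


lemma Phi_succ (hm : ∀ j, StronglyMeasurable (h j))
    (hint : ∀ j, IntegrableOn (h j) (Ici (0:ℝ))) {ξ : ℝ} (hξ : 0 < ξ) (m : ℕ) (r : ℝ) :
    Phi h ξ (m+1) r = (ξ:ℂ) * ∫ s in Ioi (0:ℝ), h m s * Phi h ξ m (r - ξ * s) := by
  rcases lt_or_ge r 0 with hr | hr
  · rw [Phi, if_neg (not_le.2 hr)]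
    have hz : EqOn (fun s => h m s * Phi h ξ m (r - ξ * s)) (fun _ => (0:ℂ)) (Ioi (0:ℝ)) := by
      intro s hs
      have hneg : r - ξ * s < 0 := by
        have : 0 < ξ * s := mul_pos hξ hs
        linarith
      simp only [Phi, if_neg (not_le.2 hneg), mul_zero]
    rw [setIntegral_congr_fun measurableSet_Ioi hz]
    simp
  · rw [Phi, if_pos hr, intervalIntegral.integral_of_le hr]
    have hkey : EqOn (chainKernelIntegral h ξ (m+1))
        (fun t₁ => (ξ:ℂ) * ∫ s in Ioi (0:ℝ), h m s * Psi h ξ m (t₁ - ξ * s)) (Ioc 0 r) :=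
      fun t₁ ht₁ => chain_succ_eq hm hξ m ht₁.1.le
    rw [setIntegral_congr_fun measurableSet_Ioc hkey, MeasureTheory.integral_const_mul]
    congr 1
    set C := ξ ^ m * ∏ j ∈ Finset.range m, ∫ v in Ioi (0:ℝ), ‖h j v‖ with hC
    have hmeas : AEStronglyMeasurable (fun p : ℝ × ℝ => h m p.2 * Psi h ξ m (p.1 - ξ * p.2))
        ((volume.restrict (Ioc (0:ℝ) r)).prod (volume.restrict (Ioi (0:ℝ)))) := by
      apply StronglyMeasurable.aestronglyMeasurable
      exact ((hm m).comp_measurable measurable_snd).mul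
        ((Psi_sm hm ξ m).comp_measurable (measurable_fst.sub (measurable_snd.const_mul ξ)))
    have hdom : Integrable (fun p : ℝ × ℝ => (1:ℝ) * (‖h m p.2‖ * C))
        ((volume.restrict (Ioc (0:ℝ) r)).prod (volume.restrict (Ioi (0:ℝ)))) := by
      apply Integrable.mul_prod (f := fun _ : ℝ => (1:ℝ)) (g := fun s => ‖h m s‖ * C)
      · exact integrable_const 1
      · exact (IntegrableOn.mono_set (hint m).norm Ioi_subset_Ici_self).mul_const C
    have hInt : Integrable (fun p : ℝ × ℝ => h m p.2 * Psi h ξ m (p.1 - ξ * p.2))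
        ((volume.restrict (Ioc (0:ℝ) r)).prod (volume.restrict (Ioi (0:ℝ)))) := by
      apply Integrable.mono' hdom hmeas
      refine Eventually.of_forall fun p => ?_
      rw [norm_mul, one_mul]
      exact mul_le_mul_of_nonneg_left (Psi_norm_le hm hint hξ m _) (norm_nonneg _)
    have hswap := MeasureTheory.integral_integral_swap
      (f := fun t₁ s => h m s * Psi h ξ m (t₁ - ξ * s)) hInt
    rw [hswap]
    apply setIntegral_congr_fun measurableSet_Ioi
    intro s hs
    simp only
    rw [MeasureTheory.integral_const_mul,
      Psi_primitive hm hint hξ m hr (mul_nonneg hξ.le (le_of_lt hs))]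


lemma Phi_tendsto (hm : ∀ j, StronglyMeasurable (h j))
    (hint : ∀ j, IntegrableOn (h j) (Ici (0:ℝ))) :
    ∀ (m : ℕ) (x : ℝ → ℝ) (x₀ : ℝ), 0 ≤ x₀ → Tendsto x (𝓝[>] (0:ℝ)) (𝓝 x₀) →
    Tendsto (fun ξ : ℝ => (1 / (ξ:ℂ) ^ m) * Phi h ξ m (x ξ)) (𝓝[>] (0:ℝ))
      (𝓝 ((x₀:ℂ) * ∏ j ∈ Finset.range m, ∫ s in Ioi (0:ℝ), h j s)) := by
  intro m
  induction m with
  | zero =>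
    intro x x₀ hx₀ hx
    simp only [pow_zero, Finset.range_zero, Finset.prod_empty, mul_one, one_mul,
      ne_eq, one_ne_zero, not_false_eq_true, div_self]
    have heq : (fun ξ : ℝ => Phi h ξ 0 (x ξ)) = fun ξ => ((max (x ξ) 0 : ℝ) : ℂ) := by
      funext ξ
      rw [Phi]
      split_ifs with hxx
      · show (∫ _ in (0:ℝ)..x ξ, (1:ℂ)) = _
        rw [intervalIntegral.integral_const]
        simp [max_eq_left hxx]
      · simp [max_eq_right (le_of_not_ge hxx)]
    rw [heq]
    have hmax : Tendsto (fun ξ => max (x ξ) 0) (𝓝[>] (0:ℝ)) (𝓝 (max x₀ 0)) :=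
      hx.max tendsto_const_nhds
    rw [max_eq_left hx₀] at hmax
    exact (Complex.continuous_ofReal.tendsto x₀).comp hmax
  | succ m ih =>
    intro x x₀ hx₀ hx
    have hPA : 0 ≤ ∏ j ∈ Finset.range m, ∫ v in Ioi (0:ℝ), ‖h j v‖ :=
      Finset.prod_nonneg fun j _ => integral_nonneg fun v => norm_nonneg _
    have hev : (fun ξ : ℝ => ∫ s in Ioi (0:ℝ),
          h m s * ((1 / (ξ:ℂ) ^ m) * Phi h ξ m (x ξ - ξ * s)))
        =ᶠ[𝓝[>] (0:ℝ)] (fun ξ : ℝ => (1 / (ξ:ℂ) ^ (m+1)) * Phi h ξ (m+1) (x ξ)) := by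
      filter_upwards [self_mem_nhdsWithin] with ξ hξ'
      have hξ : (0:ℝ) < ξ := hξ'
      have hξC : ((ξ:ℂ)) ≠ 0 := by exact_mod_cast hξ.ne'
      rw [Phi_succ hm hint hξ m (x ξ), ← mul_assoc]
      have hc : (1 / (ξ:ℂ) ^ (m+1)) * (ξ:ℂ) = 1 / (ξ:ℂ) ^ m := by
        field_simp
        ring
      rw [hc, ← MeasureTheory.integral_const_mul]
      congr 1
      funext s
      ring
    have hlim0 : Tendsto (fun ξ : ℝ => ξ) (𝓝[>] (0:ℝ)) (𝓝 0) :=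
      tendsto_id.mono_right nhdsWithin_le_nhds
    have main : Tendsto (fun ξ : ℝ => ∫ s in Ioi (0:ℝ),
          h m s * ((1 / (ξ:ℂ) ^ m) * Phi h ξ m (x ξ - ξ * s)))
        (𝓝[>] (0:ℝ))
        (𝓝 (∫ s in Ioi (0:ℝ),
          h m s * ((x₀:ℂ) * ∏ j ∈ Finset.range m, ∫ v in Ioi (0:ℝ), h j v))) := by
      apply MeasureTheory.tendsto_integral_filter_of_dominated_convergence
        (bound := fun s => ‖h m s‖ * ((x₀ + 1) * ∏ j ∈ Finset.range m, ∫ v in Ioi (0:ℝ), ‖h j v‖))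
      · refine Eventually.of_forall fun ξ => StronglyMeasurable.aestronglyMeasurable ?_
        exact (hm m).mul (stronglyMeasurable_const.mul ((Phi_sm hm ξ m).comp_measurable
          (measurable_const.sub (measurable_id.const_mul ξ))))
      · have hxev : ∀ᶠ ξ in 𝓝[>] (0:ℝ), x ξ < x₀ + 1 :=
          hx.eventually_lt_const (by linarith)
        filter_upwards [self_mem_nhdsWithin, hxev] with ξ hξ' hxlt
        have hξ : (0:ℝ) < ξ := hξ'
        refine (ae_restrict_iff' measurableSet_Ioi).2 (Eventually.of_forall fun s hs => ?_)
        rw [norm_mul, norm_mul]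
        apply mul_le_mul_of_nonneg_left _ (norm_nonneg _)
        have hnorm1 : ‖(1 / (ξ:ℂ) ^ m)‖ = 1 / ξ ^ m := by
          rw [norm_div, norm_one, norm_pow, Complex.norm_real, Real.norm_eq_abs,
            abs_of_pos hξ]
        rw [hnorm1]
        have hPhi := Phi_norm_le hm hint hξ m (x ξ - ξ * s)
        have hmaxle : max (x ξ - ξ * s) 0 ≤ x₀ + 1 := by
          have : 0 < ξ * s := mul_pos hξ hs
          apply max_le (by linarith) (by linarith)
        calc (1 / ξ ^ m) * ‖Phi h ξ m (x ξ - ξ * s)‖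
            ≤ (1 / ξ ^ m) * (max (x ξ - ξ * s) 0 * (ξ ^ m *
                ∏ j ∈ Finset.range m, ∫ v in Ioi (0:ℝ), ‖h j v‖)) := by
              apply mul_le_mul_of_nonneg_left hPhi (by positivity)
          _ = max (x ξ - ξ * s) 0 * ∏ j ∈ Finset.range m, ∫ v in Ioi (0:ℝ), ‖h j v‖ := by
              field_simp
          _ ≤ (x₀ + 1) * ∏ j ∈ Finset.range m, ∫ v in Ioi (0:ℝ), ‖h j v‖ :=
              mul_le_mul_of_nonneg_right hmaxle hPA
      · exact (IntegrableOn.mono_set (hint m).norm Ioi_subset_Ici_self).mul_const _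
      · refine (ae_restrict_iff' measurableSet_Ioi).2 (Eventually.of_forall fun s hs => ?_)
        have hxs : Tendsto (fun ξ : ℝ => x ξ - ξ * s) (𝓝[>] (0:ℝ)) (𝓝 x₀) := by
          have := hx.sub (hlim0.mul_const s)
          simpa using this
        exact (ih (fun ξ => x ξ - ξ * s) x₀ hx₀ hxs).const_mul (h m s)
    have hval : (∫ s in Ioi (0:ℝ),
          h m s * ((x₀:ℂ) * ∏ j ∈ Finset.range m, ∫ v in Ioi (0:ℝ), h j v))
        = (x₀:ℂ) * ∏ j ∈ Finset.range (m+1), ∫ s in Ioi (0:ℝ), h j s := by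
      rw [MeasureTheory.integral_mul_const, Finset.prod_range_succ]
      ring
    rw [hval] at main
    exact main.congr' hev

end LowDensityAux

end

/-- Contribution of the connected diagram in the low density limit: for `n ≥ 2`,
kernels `h_0, …, h_{n−2}` integrable on `[0,∞)` and `t > 0`,
`ξ^{−(n−1)} ∫_0^t dt₁ ∫_0^{t₁} dt₂ ⋯ ∫_0^{t_{n−1}} dt_n Π_j h_j((t_j − t_{j+1})/ξ)`
converges as `ξ → 0⁺` to `t ⋅ Π_j ∫_0^∞ h_j(s) ds`. -/
theorem lowDensity_connected_diagram_limit
    (n : ℕ) (hn : 2 ≤ n)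
    (h : ℕ → ℝ → ℂ) (hh : ∀ j < n - 1, IntegrableOn (h j) (Set.Ici (0 : ℝ)))
    (t : ℝ) (ht : 0 < t) :
    Tendsto
      (fun ξ : ℝ => (1 / ξ ^ (n - 1) : ℂ) *
        ∫ t₁ in (0 : ℝ)..t, chainKernelIntegral h ξ (n - 1) t₁)
      (𝓝[>] 0)
      (𝓝 ((t : ℂ) * ∏ j ∈ Finset.range (n - 1), ∫ s in Set.Ioi (0 : ℝ), h j s)) := by

  classical
  set g : ℕ → ℝ → ℂ := fun j => if hj : j < n - 1 then
    (Set.Ici (0:ℝ)).indicator ((hh j hj).aestronglyMeasurable.mk (h j)) else 0 with hg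
  have hgmeas : ∀ j, StronglyMeasurable (g j) := by
    intro j
    rw [hg]
    by_cases hj : j < n - 1
    · beta_reduce
      rw [dif_pos hj]
      exact ((hh j hj).aestronglyMeasurable.stronglyMeasurable_mk).indicator measurableSet_Ici
    · beta_reduce
      rw [dif_neg hj]
      exact stronglyMeasurable_const
  have hae : ∀ j, j < n - 1 → h j =ᵐ[volume.restrict (Set.Ici (0:ℝ))] g j := by
    intro j hj
    have h1 := (hh j hj).aestronglyMeasurable.ae_eq_mk
    have h2 : (hh j hj).aestronglyMeasurable.mk (h j) =ᵐ[volume.restrict (Set.Ici (0:ℝ))] g j := by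
      filter_upwards [ae_restrict_mem measurableSet_Ici] with x hx
      rw [hg]
      beta_reduce
      rw [dif_pos hj, Set.indicator_of_mem hx]
    exact h1.trans h2
  have hgint : ∀ j, IntegrableOn (g j) (Set.Ici (0:ℝ)) := by
    intro j
    by_cases hj : j < n - 1
    · exact (hh j hj).congr_fun_ae (hae j hj)
    · rw [hg]
      beta_reduce
      rw [dif_neg hj]
      exact integrableOn_zero
  have hqmp : ∀ (ξ s : ℝ), ξ ≠ 0 → Measure.QuasiMeasurePreserving
      (fun u : ℝ => (s - u) / ξ) volume volume := by
    intro ξ s hξ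
    have q1 : MeasurePreserving (fun u : ℝ => s - u) volume volume :=
      Measure.measurePreserving_sub_left volume s
    have q2 : Measure.QuasiMeasurePreserving (fun x : ℝ => x / ξ) volume volume := by
      refine ⟨measurable_id.div_const ξ, ?_⟩
      have hfun : (fun x : ℝ => x / ξ) = fun x : ℝ => ξ⁻¹ * x := by
        funext x; rw [div_eq_inv_mul]
      rw [hfun, Real.map_volume_mul_left (inv_ne_zero hξ)]
      exact Measure.smul_absolutelyContinuous
    exact q2.comp q1.quasiMeasurePreserving
  have hchain : ∀ ξ : ℝ, 0 < ξ → ∀ m', m' ≤ n - 1 → ∀ s : ℝ, 0 ≤ s →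
      chainKernelIntegral h ξ m' s = chainKernelIntegral g ξ m' s := by
    intro ξ hξ m'
    induction m' with
    | zero => intro _ s _; rfl
    | succ m' ih =>
      intro hm' s hs
      have hj : m' < n - 1 := Nat.lt_of_succ_le hm'
      show (∫ u in (0:ℝ)..s, h m' ((s - u)/ξ) * chainKernelIntegral h ξ m' u)
        = ∫ u in (0:ℝ)..s, g m' ((s - u)/ξ) * chainKernelIntegral g ξ m' u
      apply intervalIntegral.integral_congr_ae
      have haev : ∀ᵐ x ∂(volume : Measure ℝ), x ∈ Set.Ici (0:ℝ) → h m' x = g m' x :=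
        (ae_restrict_iff' measurableSet_Ici).1 (hae m' hj)
      have hpull := (hqmp ξ s hξ.ne').ae haev
      filter_upwards [hpull] with u hu hmem
      rw [Set.uIoc_of_le hs] at hmem
      have hu0 : (s - u)/ξ ∈ Set.Ici (0:ℝ) := by
        apply div_nonneg _ hξ.le
        linarith [hmem.2]
      rw [hu hu0, ih (le_of_lt hj) u hmem.1.le]
  have hIoi : ∀ j, j < n - 1 → (∫ s in Set.Ioi (0:ℝ), h j s) = ∫ s in Set.Ioi (0:ℝ), g j s := by
    intro j hj
    apply MeasureTheory.integral_congr_ae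
    exact ae_restrict_of_ae_restrict_of_subset Set.Ioi_subset_Ici_self (hae j hj)
  have hmain := LowDensityAux.Phi_tendsto hgmeas hgint (n-1) (fun _ => t) t ht.le tendsto_const_nhds
  have hprod : (∏ j ∈ Finset.range (n-1), ∫ s in Set.Ioi (0:ℝ), h j s)
      = ∏ j ∈ Finset.range (n-1), ∫ s in Set.Ioi (0:ℝ), g j s :=
    Finset.prod_congr rfl fun j hjmem => hIoi j (Finset.mem_range.1 hjmem)
  rw [hprod]
  apply hmain.congr'
  filter_upwards [self_mem_nhdsWithin] with ξ hξ'
  have hξ : (0:ℝ) < ξ := hξ'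
  show (1 / (ξ:ℂ) ^ (n-1)) * LowDensityAux.Phi g ξ (n-1) t = _
  rw [LowDensityAux.Phi, if_pos ht.le]
  congr 1
  apply intervalIntegral.integral_congr
  intro t₁ ht₁
  rw [Set.uIcc_of_le ht.le] at ht₁
  exact (hchain ξ hξ (n-1) le_rfl t₁ ht₁.1).symm
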